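/- Assume N ≥ 3 and let 3 ≤ j ≤ N. If x = Σ_{i=1}^N α_i·p_i with Σ_{i=1}^N α_i = 1, then Π(S_j(x)) = (1/(N+2))·Π(x) + ((N·α_j + 1)/(N+2))·p. (Projection formula from the proof of Lemma 2.8.) -/

import Mathlib

open Set Filter

noncomputable section

abbrev E (N : ℕ) := EuclideanSpace ℝ (Fin N)

/-- Vertex `p_j` of the regular simplex. -/
def gPt (N : ℕ) (j : Fin N) : E N :=
  (Real.sqrt 2)⁻¹ • (EuclideanSpace.single j (1 : ℝ) -
    (N : ℝ)⁻¹ • ∑ i : Fin N, EuclideanSpace.single i (1 : ℝ))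

/-- The affine map `S_j`. -/
def gS (N : ℕ) (j : Fin N) (x : E N) : E N :=
  ((N : ℝ) + 2)⁻¹ • x +
    (((N : ℝ) + 2)⁻¹ * (2 + ((N : ℝ) - 1) * (inner ℝ x (gPt N j) : ℝ) / ‖gPt N j‖ ^ 2)) • gPt N j

/-- Subspace `P`, the span of `p₁, p₂`. -/
def gP (N : ℕ) (hN : 2 ≤ N) : Submodule ℝ (E N) :=
  Submodule.span ℝ {gPt N ⟨0, by omega⟩, gPt N ⟨1, by omega⟩}

/-- Orthogonal projection onto `P`. -/
def gProj (N : ℕ) (hN : 2 ≤ N) (x : E N) : E N :=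
  (Submodule.orthogonalProjection (gP N hN) x : E N)

/-- The point `p = Π(p₃)`. -/
def gp (N : ℕ) (hN : 3 ≤ N) : E N :=
  gProj N (by omega) (gPt N ⟨2, by omega⟩)

lemma inner_single_single (N : ℕ) (i k : Fin N) :
    (inner ℝ (EuclideanSpace.single i (1:ℝ)) (EuclideanSpace.single k (1:ℝ)) : ℝ)
      = if i = k then 1 else 0 := by
  simp [EuclideanSpace.inner_single_left, EuclideanSpace.single_apply, eq_comm]

lemma inner_gPt (N : ℕ) (hN : 1 ≤ N) (i j : Fin N) :
    (inner ℝ (gPt N i) (gPt N j) : ℝ) = ((if i = j then 1 else 0) - (N:ℝ)⁻¹) / 2 := by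
  have hN0 : (N:ℝ) ≠ 0 := Nat.cast_ne_zero.mpr (by omega)
  have hs : (Real.sqrt 2)⁻¹ * (Real.sqrt 2)⁻¹ = 2⁻¹ := by
    rw [← mul_inv, Real.mul_self_sqrt (by norm_num)]
  set u : E N := ∑ k : Fin N, EuclideanSpace.single k (1:ℝ) with hu
  have h2 : ∀ i : Fin N, (inner ℝ (EuclideanSpace.single i (1:ℝ)) u : ℝ) = 1 := by
    intro i
    rw [hu, inner_sum]
    simp [inner_single_single]
  have h2' : ∀ i : Fin N, (inner ℝ u (EuclideanSpace.single i (1:ℝ)) : ℝ) = 1 := by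
    intro i; rw [real_inner_comm]; exact h2 i
  have h3 : (inner ℝ u u : ℝ) = N := by
    rw [hu, inner_sum]
    simp [sum_inner, inner_single_single]
  simp only [gPt, real_inner_smul_left, real_inner_smul_right, inner_sub_left, inner_sub_right,
    ← hu, inner_single_single, h2, h2', h3]
  have hs2 : Real.sqrt 2 ^ 2 = 2 := Real.sq_sqrt (by norm_num)
  field_simp [hs2]
  rw [hs2]
  ring

lemma norm_gPt_sq (N : ℕ) (hN : 1 ≤ N) (j : Fin N) :
    ‖gPt N j‖ ^ 2 = (1 - (N:ℝ)⁻¹) / 2 := by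
  rw [← real_inner_self_eq_norm_sq, inner_gPt N hN j j, if_pos rfl]

lemma gProj_gPt (N : ℕ) (hN : 3 ≤ N) (j : Fin N) (hj : 2 ≤ (j : ℕ)) :
    gProj N (by linarith) (gPt N j) = gp N hN := by
  have h2 : 2 ≤ N := by omega
  have horth : gPt N j - gPt N ⟨2, by omega⟩ ∈ (gP N h2)ᗮ := by
    rw [Submodule.mem_orthogonal']
    intro u hu
    induction hu using Submodule.span_induction with
    | mem y hy =>
      rcases hy with hy | hy <;> subst hy <;>
      · rw [inner_sub_left, inner_gPt N (by omega), inner_gPt N (by omega)]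
        rw [if_neg (by simp only [Fin.ext_iff, Fin.val_mk]; omega),
          if_neg (by simp only [Fin.ext_iff, Fin.val_mk]; omega)]
        ring
    | zero => simp
    | add y z _ _ hy hz => rw [inner_add_right, hy, hz, add_zero]
    | smul c y _ hy => rw [inner_smul_right, hy, mul_zero]
  have : gProj N h2 (gPt N j - gPt N ⟨2, by omega⟩) = 0 := by
    simp only [gProj]
    rw [Submodule.orthogonalProjectionOnto_eq_zero_iff.mpr horth]
    rfl
  have hlin : gProj N h2 (gPt N j - gPt N ⟨2, by omega⟩)
      = gProj N h2 (gPt N j) - gProj N h2 (gPt N ⟨2, by omega⟩) := by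
    simp [gProj]
  rw [hlin] at this
  have := sub_eq_zero.mp this
  simpa [gp] using this

/-- projection formula from the proof of Lemma 2.8: if
`x = Σ α_i p_i` with `Σ α_i = 1` and `3 ≤ j`, then
`Π(S_j x) = (N+2)⁻¹ Π(x) + ((N α_j + 1)/(N+2)) p`. -/
theorem proj_Sj_formula (N : ℕ) (hN : 3 ≤ N) (j : Fin N) (hj : 2 ≤ (j : ℕ))
    (α : Fin N → ℝ) (hα : ∑ i : Fin N, α i = 1)
    (x : E N) (hx : x = ∑ i : Fin N, α i • gPt N i) :
    gProj N (by omega) (gS N j x) =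
      ((N : ℝ) + 2)⁻¹ • gProj N (by omega) x +
        (((N : ℝ) * α j + 1) / ((N : ℝ) + 2)) • gp N hN := by
  have hN0 : (N:ℝ) ≠ 0 := Nat.cast_ne_zero.mpr (by omega)
  have hN1 : (N:ℝ) - 1 ≠ 0 := by
    have : (3:ℝ) ≤ N := by exact_mod_cast hN
    nlinarith
  have hN2 : (N:ℝ) + 2 ≠ 0 := by positivity
  have hinner : (inner ℝ x (gPt N j) : ℝ) = (α j - (N:ℝ)⁻¹) / 2 := by
    rw [hx, sum_inner]
    have : ∀ i : Fin N, (inner ℝ (α i • gPt N i) (gPt N j) : ℝ)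
        = α i * (((if i = j then 1 else 0) - (N:ℝ)⁻¹) / 2) := by
      intro i; rw [real_inner_smul_left, inner_gPt N (by omega)]
    rw [Finset.sum_congr rfl fun i _ => this i]
    have hsplit : ∑ i : Fin N, α i * (((if i = j then 1 else 0) - (N:ℝ)⁻¹) / 2)
        = (∑ i : Fin N, α i * (if i = j then 1 else 0)) / 2
          - (∑ i : Fin N, α i) * ((N:ℝ)⁻¹ / 2) := by
      rw [Finset.sum_div, Finset.sum_mul, ← Finset.sum_sub_distrib]
      exact Finset.sum_congr rfl fun i _ => by ring
    rw [hsplit, hα]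
    have : ∑ i : Fin N, α i * (if i = j then 1 else 0) = α j := by
      simp [Finset.sum_ite_eq']
    rw [this]; ring
  have hS : gS N j x = ((N : ℝ) + 2)⁻¹ • x
      + (((N : ℝ) * α j + 1) / ((N : ℝ) + 2)) • gPt N j := by
    rw [gS, hinner, norm_gPt_sq N (by omega)]
    congr 1
    congr 1
    have h1N : (1:ℝ) - (N:ℝ)⁻¹ ≠ 0 := by
      have h3 : (3:ℝ) ≤ N := by exact_mod_cast hN
      have hNpos : (0:ℝ) < N := by positivity
      have hinv : (N:ℝ)⁻¹ * N = 1 := inv_mul_cancel₀ hN0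
      have : (N:ℝ)⁻¹ < 1 := by nlinarith
      exact ne_of_gt (by linarith)
    field_simp
    ring
  rw [hS]
  have hlin : gProj N (by omega : 2 ≤ N) (((N : ℝ) + 2)⁻¹ • x
      + (((N : ℝ) * α j + 1) / ((N : ℝ) + 2)) • gPt N j)
      = ((N : ℝ) + 2)⁻¹ • gProj N (by omega) x
        + (((N : ℝ) * α j + 1) / ((N : ℝ) + 2)) • gProj N (by omega) (gPt N j) := by
    simp [gProj, map_add, map_smul]
  rw [hlin, gProj_gPt N hN j hj]
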